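/- Under the Case-C1 setup, every path from s_1 to v_2 contains v_6, and every path from s_2 to v_2 contains v_6. -/

import Mathlib

open List

/-- `IsPath E p u w` : the nonempty list `p` of vertices is a directed path
from `u` to `w` with respect to the edge relation `E`. -/
def IsPath {V : Type*} (E : V → V → Prop) (p : List V) (u w : V) : Prop :=
  p ≠ [] ∧ p.head? = some u ∧ p.getLast? = some w ∧ p.Chain' E

/-- `Reaches E u w` (written `u ~> w`) : there is a directed path from `u` to `w`. -/
def Reaches {V : Type*} (E : V → V → Prop) (u w : V) : Prop :=
  ∃ p, IsPath E p u w

/-- A two-unicast layered network: a finite directed graph, with two sources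
`s1, s2` and two destinations `d1, d2` (all four distinct), vertices partitioned
into layers `1, ..., r` such that every edge goes from a layer to the next one,
the first layer is `{s1, s2}`, the last layer is `{d1, d2}`, and each source
reaches its corresponding destination. -/
structure TwoUnicastNetwork (V : Type*) [Fintype V] where
  E : V → V → Prop
  s1 : V
  s2 : V
  d1 : V
  d2 : V
  r : ℕ
  layer : V → ℕ
  layer_pos : ∀ v, 1 ≤ layer v
  layer_le : ∀ v, layer v ≤ r
  edge_layer : ∀ u w, E u w → layer w = layer u + 1
  s_ne : s1 ≠ s2
  d_ne : d1 ≠ d2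
  sd_ne : ∀ s d, (s = s1 ∨ s = s2) → (d = d1 ∨ d = d2) → s ≠ d
  first_layer : ∀ v, layer v = 1 ↔ v = s1 ∨ v = s2
  last_layer : ∀ v, layer v = r ↔ v = d1 ∨ v = d2
  conn1 : Reaches E s1 d1
  conn2 : Reaches E s2 d2

/-- `InterferesOn N S Ri srcOther v` : within the induced subgraph `G[S]`, the
node `v` causes interference on the path `Ri` : `v ∈ S`, `v ∉ Ri`, there is an
edge (inside `G[S]`) from `v` into a node of `Ri`, and there is a path from the
other source `srcOther` to `v` lying inside `G[S]` and disjoint from `Ri`. -/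
def InterferesOn {V : Type*} [Fintype V] (N : TwoUnicastNetwork V) (S : Set V)
    (Ri : List V) (srcOther : V) (v : V) : Prop :=
  v ∈ S ∧ v ∉ Ri ∧ (∃ w ∈ Ri, w ∈ S ∧ N.E v w) ∧
    ∃ q, IsPath N.E q srcOther v ∧ (∀ x ∈ q, x ∈ S) ∧ ∀ x ∈ q, x ∉ Ri

/-- `n_i(G[S])` : the number of nodes causing interference on `Ri` within the
induced subgraph `G[S]`, the interfering path coming from `srcOther`. -/
noncomputable def nInterf {V : Type*} [Fintype V] (N : TwoUnicastNetwork V)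
    (S : Set V) (Ri : List V) (srcOther : V) : ℕ :=
  {v | InterferesOn N S Ri srcOther v}.ncard

/-- `n_i^D` : the number of nodes of the other path `Rother` causing (direct)
interference on `Ri` in `G`. -/
noncomputable def nDirect {V : Type*} [Fintype V] (N : TwoUnicastNetwork V)
    (Ri Rother : List V) (srcOther : V) : ℕ :=
  {v | InterferesOn N Set.univ Ri srcOther v ∧ v ∈ Rother}.ncard

/-- The pair `(R1, R2)` (paths `s1 → d1` and `s2 → d2`) has manageable
interference: there is `S ⊇ R1 ∪ R2` with `n_1(G[S]) ≠ 1` and `n_2(G[S]) ≠ 1`. -/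
def Manageable {V : Type*} [Fintype V] (N : TwoUnicastNetwork V)
    (R1 R2 : List V) : Prop :=
  ∃ S : Set V, (∀ x ∈ R1, x ∈ S) ∧ (∀ x ∈ R2, x ∈ S) ∧
    nInterf N S R1 N.s2 ≠ 1 ∧ nInterf N S R2 N.s1 ≠ 1

/-- The pair `(R1, R2)` has `(s1,d1)`-manageable interference. -/
def Manageable1 {V : Type*} [Fintype V] (N : TwoUnicastNetwork V)
    (R1 R2 : List V) : Prop :=
  ∃ S : Set V, (∀ x ∈ R1, x ∈ S) ∧ (∀ x ∈ R2, x ∈ S) ∧ nInterf N S R1 N.s2 ≠ 1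

/-- The pair `(R1, R2)` has `(s2,d2)`-manageable interference. -/
def Manageable2 {V : Type*} [Fintype V] (N : TwoUnicastNetwork V)
    (R1 R2 : List V) : Prop :=
  ∃ S : Set V, (∀ x ∈ R1, x ∈ S) ∧ (∀ x ∈ R2, x ∈ S) ∧ nInterf N S R2 N.s1 ≠ 1

/-- Removal of the vertex `v` disconnects `a` from `b` :
every path from `a` to `b` contains `v`. -/
def CutVert {V : Type*} [Fintype V] (N : TwoUnicastNetwork V) (v a b : V) : Prop :=
  ∀ p, IsPath N.E p a b → v ∈ p


section Aux
variable {V : Type*} {E : V → V → Prop} {p q : List V} {u v v' w x y : V}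

lemma tun_length_pos (h : IsPath E p u w) : 0 < p.length :=
  List.length_pos_iff.mpr h.1

lemma tun_get_zero (h : IsPath E p u w) (h0 : 0 < p.length) : p[0] = u := by
  have h2 := h.2.1
  rw [List.head?_eq_getElem?, List.getElem?_eq_getElem h0] at h2
  exact Option.some_injective _ h2

lemma tun_get_last (h : IsPath E p u w) (hl : p.length - 1 < p.length) :
    p[p.length - 1] = w := by
  have h2 := h.2.2.1
  rw [List.getLast?_eq_getElem?, List.getElem?_eq_getElem hl] at h2
  exact Option.some_injective _ h2

lemma tun_mem_head (h : IsPath E p u w) : u ∈ p := by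
  have h0 := tun_length_pos h
  have := tun_get_zero h h0
  exact this ▸ List.getElem_mem h0

lemma tun_mem_last (h : IsPath E p u w) : w ∈ p := by
  have h0 := tun_length_pos h
  have hl : p.length - 1 < p.length := by omega
  have := tun_get_last h hl
  exact this ▸ List.getElem_mem hl

lemma tun_edge (h : IsPath E p u w) (i : ℕ) (hi : i + 1 < p.length) :
    E p[i] p[i+1] := by
  have := (List.isChain_iff_getElem.mp h.2.2.2) i (by omega)
  simpa using this

lemma tun_take (h : IsPath E p u w) {i : ℕ} (hi : i < p.length) :
    IsPath E (p.take (i+1)) u p[i] := by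
  have hlen : (p.take (i+1)).length = i + 1 := by
    rw [List.length_take]; omega
  have h0 : 0 < (p.take (i+1)).length := by omega
  refine ⟨List.length_pos_iff.mp h0, ?_, ?_, h.2.2.2.take _⟩
  · rw [List.head?_eq_getElem?, List.getElem?_eq_getElem h0]
    have : (p.take (i+1))[0] = p[0] := List.getElem_take
    rw [this, tun_get_zero h (by omega)]
  · have hl : (p.take (i+1)).length - 1 < (p.take (i+1)).length := by omega
    rw [List.getLast?_eq_getElem?, List.getElem?_eq_getElem hl]
    have h1 : (p.take (i+1)).length - 1 = i := by omega
    congr 1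
    have : (p.take (i+1))[(p.take (i+1)).length - 1] =
        p[(p.take (i+1)).length - 1]'(by omega) := List.getElem_take
    rw [this]
    congr 1

lemma tun_drop (h : IsPath E p u w) {i : ℕ} (hi : i < p.length) :
    IsPath E (p.drop i) p[i] w := by
  have hlen : (p.drop i).length = p.length - i := List.length_drop
  have h0 : 0 < (p.drop i).length := by omega
  refine ⟨List.length_pos_iff.mp h0, ?_, ?_, h.2.2.2.drop _⟩
  · rw [List.head?_eq_getElem?, List.getElem?_eq_getElem h0]
    have : (p.drop i)[0] = p[i+0]'(by omega) := List.getElem_drop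
    rw [this]; congr 1
  · have hl : (p.drop i).length - 1 < (p.drop i).length := by omega
    rw [List.getLast?_eq_getElem?, List.getElem?_eq_getElem hl]
    have h1 : (p.drop i)[(p.drop i).length - 1] =
        p[i + ((p.drop i).length - 1)]'(by omega) := List.getElem_drop
    rw [h1]
    have h2 : p[i + ((p.drop i).length - 1)]'(by omega) = p[p.length - 1]'(by omega) := by
      congr 1; omega
    rw [h2, tun_get_last h (by omega)]

lemma tun_append (h1 : IsPath E p u v) (h2 : IsPath E q v w) :
    IsPath E (p ++ q.tail) u w := by
  obtain ⟨a, t, rfl⟩ := List.exists_cons_of_ne_nil h2.1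
  have ha : v = a := by
    have := h2.2.1; simpa using this.symm
  subst ha
  have hchain : (∀ y ∈ t.head?, E v y) ∧ t.Chain' E := List.isChain_cons.mp h2.2.2.2
  rcases eq_or_ne t [] with rfl | ht
  · have hw : v = w := by
      have := h2.2.2.1; simpa [List.getLast?] using this
    subst hw
    simpa using h1
  · refine ⟨by simp [h1.1], ?_, ?_, ?_⟩
    · rw [List.head?_append, h1.2.1]; rfl
    · rw [List.tail_cons, List.getLast?_append]
      obtain ⟨c, t', rfl⟩ := List.exists_cons_of_ne_nil ht
      have : (c :: t').getLast? = some w := by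
        have h3 := h2.2.2.1
        rwa [List.getLast?_cons_cons] at h3
      rw [this]; rfl
    · rw [List.tail_cons]; show List.IsChain E _; rw [List.isChain_append]
      refine ⟨h1.2.2.2, hchain.2, ?_⟩
      intro x hx y hy
      rw [h1.2.2.1] at hx
      cases hx
      exact hchain.1 y hy

lemma tun_append_edge (h1 : IsPath E p u v) (he : E v v') (h2 : IsPath E q v' w) :
    IsPath E (p ++ q) u w := by
  refine ⟨by simp [h1.1], ?_, ?_, ?_⟩
  · rw [List.head?_append, h1.2.1]; rfl
  · rw [List.getLast?_append, h2.2.2.1]; rfl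
  · show List.IsChain E _; rw [List.isChain_append]
    refine ⟨h1.2.2.2, h2.2.2.2, ?_⟩
    intro a ha b hb
    rw [h1.2.2.1] at ha; rw [h2.2.1] at hb
    cases ha; cases hb; exact he

end Aux

section Aux2
variable {V : Type*} [Fintype V] (N : TwoUnicastNetwork V) {p : List V} {u w x y : V}

lemma tun_layer_get (h : IsPath N.E p u w) :
    ∀ i, (hi : i < p.length) → N.layer p[i] = N.layer u + i := by
  intro i
  induction i with
  | zero => intro hi; rw [tun_get_zero h hi]; omega
  | succ n ih =>
    intro hi
    have hn : n < p.length := by omega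
    have he := tun_edge h n hi
    rw [N.edge_layer _ _ he, ih hn]; omega

lemma tun_layer_mem (h : IsPath N.E p u w) (hx : x ∈ p) :
    ∃ i, ∃ hi : i < p.length, p[i] = x ∧ N.layer x = N.layer u + i := by
  obtain ⟨i, hi, rfl⟩ := List.mem_iff_getElem.mp hx
  exact ⟨i, hi, rfl, tun_layer_get N h i hi⟩

lemma tun_layer_inj (h : IsPath N.E p u w) (hx : x ∈ p) (hy : y ∈ p)
    (hl : N.layer x = N.layer y) : x = y := by
  obtain ⟨i, hi, hix, hlx⟩ := tun_layer_mem N h hx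
  obtain ⟨j, hj, hjy, hly⟩ := tun_layer_mem N h hy
  have : i = j := by omega
  subst this
  rw [← hix, hjy]

lemma tun_layer_le (h : IsPath N.E p u w) (hx : x ∈ p) :
    N.layer x ≤ N.layer w := by
  obtain ⟨i, hi, hix, hlx⟩ := tun_layer_mem N h hx
  have hl : p.length - 1 < p.length := by omega
  have hw := tun_get_last h hl
  have := tun_layer_get N h (p.length - 1) hl
  rw [hw] at this
  omega

lemma tun_layer_indexOf [DecidableEq V] (h : IsPath N.E p u w) (hx : x ∈ p) :
    N.layer x = N.layer u + p.idxOf x := by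
  have hlt : p.idxOf x < p.length := List.idxOf_lt_length_iff.mpr hx
  have := tun_layer_get N h (p.idxOf x) hlt
  rwa [List.getElem_idxOf hlt] at this

lemma tun_take_indexOf [DecidableEq V] (h : IsPath N.E p u w) (hx : x ∈ p) :
    IsPath N.E (p.take (p.idxOf x + 1)) u x := by
  have hlt : p.idxOf x < p.length := List.idxOf_lt_length_iff.mpr hx
  have := tun_take h hlt
  rwa [List.getElem_idxOf hlt] at this

lemma tun_interf_lift {S : Set V} {Ri : List V} {src v : V}
    (h : InterferesOn N S Ri src v) : InterferesOn N Set.univ Ri src v := by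
  obtain ⟨_, h2, ⟨w', hw1, _, hw3⟩, q, hq1, _, hq3⟩ := h
  exact ⟨trivial, h2, ⟨w', hw1, trivial, hw3⟩, q, hq1, fun x _ => trivial, hq3⟩

end Aux2

theorem statement9 {V : Type*} [Fintype V] [DecidableEq V]
    (N : TwoUnicastNetwork V)
    (P11 P22 Ps2v1 Pvmv1 Ps1v2 : List V)
    (v0 v1 v2 v3 v4 v5 v6 vm : V)
    (hP11 : IsPath N.E P11 N.s1 N.d1)
    (hP22 : IsPath N.E P22 N.s2 N.d2)
    (hdisj : P11.Disjoint P22)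
    (hNoMan : ∀ R1 R2 : List V, IsPath N.E R1 N.s1 N.d1 → IsPath N.E R2 N.s2 N.d2 →
      R1.Disjoint R2 → ¬ Manageable N R1 R2)
    (hn1 : 2 ≤ nInterf N Set.univ P11 N.s2)
    (hn1D : nDirect N P11 P22 N.s2 = 1)
    (hn2 : nInterf N Set.univ P22 N.s1 = 1)
    (hn2D : nDirect N P22 P11 N.s1 = 0)
    (hv3P22 : v3 ∈ P22)
    (hv3unique : {v | InterferesOn N Set.univ P11 N.s2 v ∧ v ∈ P22} = {v3})
    (hv4P11 : v4 ∈ P11)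
    (hv3v4 : N.E v3 v4)
    (hv3v4unique : ∀ w ∈ P11, N.E v3 w → w = v4)
    (hv1P11 : v1 ∉ P11)
    (hv1P22 : v1 ∉ P22)
    (hv1int : InterferesOn N Set.univ P11 N.s2 v1)
    (hPs2v1 : IsPath N.E Ps2v1 N.s2 v1)
    (hPs2v1disj : Ps2v1.Disjoint P11)
    (hvmP22 : vm ∈ P22)
    (hvmPs2v1 : vm ∈ Ps2v1)
    (hvmlast : ∀ x ∈ Ps2v1, x ∈ P22 → Ps2v1.idxOf x ≤ Ps2v1.idxOf vm)
    (hPvmv1 : IsPath N.E Pvmv1 vm v1)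
    (hPvmv1suffix : Pvmv1 <:+ Ps2v1)
    (hv2Pvmv1 : v2 ∈ Pvmv1)
    (hv2ne : v2 ≠ vm)
    (hv2unique : {v | InterferesOn N Set.univ P22 N.s1 v} = {v2})
    (hv0P22 : v0 ∈ P22)
    (hv2v0 : N.E v2 v0)
    (hv2v0unique : ∀ w ∈ P22, N.E v2 w → w = v0)
    (hPs1v2 : IsPath N.E Ps1v2 N.s1 v2)
    (hPs1v2sub : ∀ x ∈ Ps1v2, x ∈ P11 ∨ x ∈ P22 ∨ x ∈ Pvmv1)
    (hv5P11 : v5 ∈ P11)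
    (hv5mem : v5 ∈ Ps1v2)
    (hv5last : ∀ x ∈ Ps1v2, x ∈ P11 → Ps1v2.idxOf x ≤ Ps1v2.idxOf v5)
    (hv6succ : ∃ k : ℕ, Ps1v2[k]? = some v5 ∧ Ps1v2[k+1]? = some v6) :
    (∀ p : List V, IsPath N.E p N.s1 v2 → v6 ∈ p) ∧
    (∀ p : List V, IsPath N.E p N.s2 v2 → v6 ∈ p) := by
  classical
  have hs1P11 : N.s1 ∈ P11 := tun_mem_head hP11
  obtain ⟨k, hk5, hk6⟩ := hv6succ
  obtain ⟨hk5lt, hk5e⟩ := List.getElem?_eq_some_iff.mp hk5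
  obtain ⟨hk6lt, hk6e⟩ := List.getElem?_eq_some_iff.mp hk6
  have hv5mem' : v5 ∈ Ps1v2 := hk5e ▸ List.getElem_mem hk5lt
  have hv6mem : v6 ∈ Ps1v2 := hk6e ▸ List.getElem_mem hk6lt
  have e56 : N.E v5 v6 := by
    have h := tun_edge hPs1v2 k hk6lt
    rwa [hk5e, hk6e] at h
  have hL65 : N.layer v6 = N.layer v5 + 1 := N.edge_layer _ _ e56
  have hv6P11 : v6 ∉ P11 := by
    intro hmem
    have h5 := tun_layer_indexOf N hPs1v2 hv5mem'
    have h6 := tun_layer_indexOf N hPs1v2 hv6mem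
    have h7 := hv5last v6 hv6mem hmem
    omega
  have hq5 : IsPath N.E (P11.take (P11.idxOf v5 + 1)) N.s1 v5 :=
    tun_take_indexOf N hP11 hv5P11
  have hq5sub : ∀ x ∈ P11.take (P11.idxOf v5 + 1), x ∈ P11 :=
    fun x hx => List.take_subset _ _ hx
  have hv6P22 : v6 ∉ P22 := by
    intro hmem
    have hempty : {v | InterferesOn N Set.univ P22 N.s1 v ∧ v ∈ P11}
        = (∅ : Set V) := (Set.ncard_eq_zero (Set.toFinite _)).mp hn2D
    have hv5in : v5 ∈ {v | InterferesOn N Set.univ P22 N.s1 v ∧ v ∈ P11} := by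
      refine ⟨⟨trivial, fun h => hdisj hv5P11 h, ⟨v6, hmem, trivial, e56⟩,
        _, hq5, fun x _ => trivial, fun x hx hxP22 => hdisj (hq5sub x hx) hxP22⟩, hv5P11⟩
    rw [hempty] at hv5in
    exact hv5in
  have hv6Pvm : v6 ∈ Pvmv1 := by
    rcases hPs1v2sub v6 hv6mem with h | h | h
    · exact absurd h hv6P11
    · exact absurd h hv6P22
    · exact h
  have hv2int : InterferesOn N Set.univ P22 N.s1 v2 := by
    have h : v2 ∈ {v | InterferesOn N Set.univ P22 N.s1 v} := by rw [hv2unique]; rfl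
    exact h
  have hv2P22 : v2 ∉ P22 := hv2int.2.1
  have hPvmSub : ∀ x ∈ Pvmv1, x ∉ P11 :=
    fun x hx => hPs2v1disj (hPvmv1suffix.subset hx)
  have hL6vm := tun_layer_indexOf N hPvmv1 hv6Pvm
  have hL2vm := tun_layer_indexOf N hPvmv1 hv2Pvmv1
  have hi6pos : 0 < Pvmv1.idxOf v6 := by
    rcases Nat.eq_zero_or_pos (Pvmv1.idxOf v6) with h0 | h
    · exfalso
      have hlt : Pvmv1.idxOf v6 < Pvmv1.length := List.idxOf_lt_length_iff.mpr hv6Pvm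
      have hg : Pvmv1[Pvmv1.idxOf v6] = v6 := List.getElem_idxOf hlt
      have hg0 : Pvmv1[Pvmv1.idxOf v6]'hlt = Pvmv1[0]'(by omega) := by congr 1
      rw [hg0, tun_get_zero hPvmv1 (by omega)] at hg
      exact hv6P22 (hg ▸ hvmP22)
    · exact h
  have hL6le2 : N.layer v6 ≤ N.layer v2 := tun_layer_le N hPs1v2 hv6mem
  have hi62 : Pvmv1.idxOf v6 ≤ Pvmv1.idxOf v2 := by omega
  set im2 := Pvmv1.idxOf v2 with him2
  have him2lt : im2 < Pvmv1.length := List.idxOf_lt_length_iff.mpr hv2Pvmv1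
  have hMid : IsPath N.E (Pvmv1.take (im2+1)) vm v2 := tun_take_indexOf N hPvmv1 hv2Pvmv1
  have hA : IsPath N.E (P22.take (P22.idxOf vm + 1)) N.s2 vm := tun_take_indexOf N hP22 hvmP22
  have hAM : IsPath N.E (P22.take (P22.idxOf vm + 1) ++ (Pvmv1.take (im2+1)).tail)
      N.s2 v2 := tun_append hA hMid
  have hB : IsPath N.E (P22.drop (P22.idxOf v0)) v0 N.d2 := by
    have hlt : P22.idxOf v0 < P22.length := List.idxOf_lt_length_iff.mpr hv0P22
    have h := tun_drop hP22 hlt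
    rwa [List.getElem_idxOf hlt] at h
  set R2 := (P22.take (P22.idxOf vm + 1) ++ (Pvmv1.take (im2+1)).tail)
      ++ P22.drop (P22.idxOf v0) with hR2def
  have hR2 : IsPath N.E R2 N.s2 N.d2 := tun_append_edge hAM hv2v0 hB
  have hR2sub : ∀ x ∈ R2, x ∈ P22 ∨ x ∈ Pvmv1 := by
    intro x hx
    rcases List.mem_append.mp hx with hx | hx
    · rcases List.mem_append.mp hx with hx | hx
      · exact Or.inl (List.take_subset _ _ hx)
      · exact Or.inr (List.take_subset _ _ (List.tail_subset _ hx))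
    · exact Or.inl (List.drop_subset _ _ hx)
  have hR2P11 : ∀ x ∈ R2, x ∉ P11 := by
    intro x hx hxP11
    rcases hR2sub x hx with h | h
    · exact hdisj hxP11 h
    · exact hPvmSub x h hxP11
  have hv6R2 : v6 ∈ R2 := by
    have hlen : (Pvmv1.take (im2+1)).length = im2 + 1 := by
      rw [List.length_take]; omega
    have hlt6 : Pvmv1.idxOf v6 < Pvmv1.length := List.idxOf_lt_length_iff.mpr hv6Pvm
    have h1 : (Pvmv1.idxOf v6 - 1) < (Pvmv1.take (im2+1)).tail.length := by
      rw [List.length_tail, hlen]; omega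
    have h2 : (Pvmv1.take (im2+1)).tail[Pvmv1.idxOf v6 - 1]'h1 = v6 := by
      rw [List.getElem_tail]
      have h3 : (Pvmv1.take (im2+1))[Pvmv1.idxOf v6 - 1 + 1]'(by rw [hlen]; omega)
          = Pvmv1[Pvmv1.idxOf v6 - 1 + 1]'(by omega) := List.getElem_take
      rw [h3]
      have h4 : Pvmv1[Pvmv1.idxOf v6 - 1 + 1]'(by omega)
          = Pvmv1[Pvmv1.idxOf v6]'hlt6 := by congr 1; omega
      rw [h4]
      exact List.getElem_idxOf hlt6
    have hmem : v6 ∈ (Pvmv1.take (im2+1)).tail := h2 ▸ List.getElem_mem h1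
    exact List.mem_append.mpr (Or.inl (List.mem_append.mpr (Or.inr hmem)))
  have hv2R2 : v2 ∈ R2 := List.mem_append.mpr (Or.inl (tun_mem_last hAM))
  have hs1R2 : N.s1 ∉ R2 := fun h => hR2P11 _ h hs1P11
  have hv5R2 : v5 ∉ R2 := fun h => hR2P11 _ h hv5P11
  have hn1ne : nInterf N Set.univ P11 N.s2 ≠ 1 := by omega
  have hunique : nInterf N Set.univ R2 N.s1 = 1 := by
    by_contra hne
    exact hNoMan P11 R2 hP11 hR2 (fun a ha haR2 => hR2P11 a haR2 ha)
      ⟨Set.univ, fun x _ => trivial, fun x _ => trivial, hn1ne, hne⟩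
  obtain ⟨a, ha⟩ := Set.ncard_eq_one.mp hunique
  have hv5int : InterferesOn N Set.univ R2 N.s1 v5 :=
    ⟨trivial, hv5R2, ⟨v6, hv6R2, trivial, e56⟩,
      _, hq5, fun x _ => trivial, fun x hx hxR2 => hR2P11 x hxR2 (hq5sub x hx)⟩
  have hav5 : a = v5 := by
    have h1 : v5 ∈ ({a} : Set V) := by rw [← ha]; exact hv5int
    exact (Set.mem_singleton_iff.mp h1).symm
  have claim1 : ∀ W, IsPath N.E W N.s1 v2 → v6 ∈ W := by
    intro W hW
    by_contra h6
    have hv2W : v2 ∈ W := tun_mem_last hW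
    have hex : ∃ i, ∃ h : i < W.length, W[i] ∈ R2 := by
      obtain ⟨i, hi, hiv⟩ := List.mem_iff_getElem.mp hv2W
      exact ⟨i, hi, hiv ▸ hv2R2⟩
    set j := Nat.find hex with hjdef
    obtain ⟨hjlt, hjR2⟩ := Nat.find_spec hex
    have hj1 : 1 ≤ j := by
      rcases Nat.eq_zero_or_pos j with h0 | h
      · exfalso
        have h00 : W[j]'hjlt = N.s1 := by
          have he : W[j]'hjlt = W[0]'(by omega) := by congr 1
          rw [he, tun_get_zero hW (by omega)]
        exact hs1R2 (h00 ▸ hjR2)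
      · exact h
    have hjm1lt : j - 1 + 1 < W.length := by omega
    have hWj : W[j-1+1]'hjm1lt = W[j]'hjlt := by congr 1; omega
    have hedge := tun_edge hW (j-1) hjm1lt
    have htake : IsPath N.E (W.take (j-1+1)) N.s1 (W[j-1]'(by omega)) :=
      tun_take hW (by omega)
    have htakedisj : ∀ x ∈ W.take (j-1+1), x ∉ R2 := by
      intro x hx hxR2
      obtain ⟨i, hi, hiv⟩ := List.mem_iff_getElem.mp hx
      have hilen : i < W.length := by
        have hh := List.length_take (i := j-1+1) (l := W)
        simp only [hh] at hi
        omega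
      have hij : i < j := by
        have hh := List.length_take (i := j-1+1) (l := W)
        simp only [hh] at hi
        omega
      rw [List.getElem_take] at hiv
      exact Nat.find_min hex hij ⟨hilen, hiv ▸ hxR2⟩
    have hzint : InterferesOn N Set.univ R2 N.s1 (W[j-1]'(by omega)) := by
      refine ⟨trivial, ?_, ⟨W[j]'hjlt, hjR2, trivial, hWj ▸ hedge⟩,
        _, htake, fun x _ => trivial, htakedisj⟩
      intro hmem
      exact Nat.find_min hex (show j - 1 < j by omega) ⟨by omega, hmem⟩
    have hz5 : (W[j-1]'(by omega)) = v5 := by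
      have h1 : (W[j-1]'(by omega)) ∈ ({a} : Set V) := by rw [← ha]; exact hzint
      rw [Set.mem_singleton_iff.mp h1, hav5]
    have hlay : N.layer (W[j]'hjlt) = N.layer v6 := by
      have h1 := N.edge_layer _ _ hedge
      rw [hWj, hz5] at h1
      omega
    have hfin : W[j]'hjlt = v6 := tun_layer_inj N hR2 hjR2 hv6R2 hlay
    exact h6 (hfin ▸ List.getElem_mem hjlt)
  have claim2 : ∀ W, IsPath N.E W N.s2 v2 → v6 ∈ W := by
    intro W hW
    by_contra h6
    have hWP11 : ∀ x ∈ W, x ∉ P11 := by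
      intro x hxW hxP11
      obtain ⟨i, hi, hiv⟩ := List.mem_iff_getElem.mp hxW
      have hdropP : IsPath N.E (W.drop i) x v2 := by
        have h := tun_drop hW hi
        rwa [hiv] at h
      have hZ : IsPath N.E (P11.take (P11.idxOf x + 1) ++ (W.drop i).tail) N.s1 v2 :=
        tun_append (tun_take_indexOf N hP11 hxP11) hdropP
      have hv6Z := claim1 _ hZ
      rcases List.mem_append.mp hv6Z with h | h
      · exact hv6P11 (List.take_subset _ _ h)
      · exact h6 (List.drop_subset _ _ (List.tail_subset _ h))
    have hT : IsPath N.E (Pvmv1.drop im2) v2 v1 := by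
      have h := tun_drop hPvmv1 him2lt
      rwa [List.getElem_idxOf him2lt] at h
    set W2 := W ++ (Pvmv1.drop im2).tail with hW2def
    have hW2 : IsPath N.E W2 N.s2 v1 := tun_append hW hT
    have hTtail : ∀ x ∈ (Pvmv1.drop im2).tail, N.layer v2 < N.layer x := by
      intro x hx
      obtain ⟨i, hi, hiv⟩ := List.mem_iff_getElem.mp hx
      have h1 : i + 1 < (Pvmv1.drop im2).length := by
        have hh := List.length_tail (l := Pvmv1.drop im2)
        omega
      have h2 : (Pvmv1.drop im2).tail[i]'hi = (Pvmv1.drop im2)[i+1]'h1 :=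
        List.getElem_tail _
      have h3 := tun_layer_get N hT (i+1) h1
      rw [← h2, hiv] at h3
      omega
    have hv6W2 : v6 ∉ W2 := by
      intro hmem
      rcases List.mem_append.mp hmem with h | h
      · exact h6 h
      · have := hTtail v6 h; omega
    set S : Set V := {x | x ∈ P11 ∨ x ∈ P22 ∨ x ∈ W2} with hSdef
    have hv6S : v6 ∉ S := by
      intro h
      rcases h with h | h | h
      exacts [hv6P11 h, hv6P22 h, hv6W2 h]
    have hW2S : ∀ x ∈ W2, x ∈ S := fun x hx => Or.inr (Or.inr hx)
    have hW2P11 : ∀ x ∈ W2, x ∉ P11 := by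
      intro x hx
      rcases List.mem_append.mp hx with h | h
      · exact hWP11 x h
      · exact hPvmSub x (List.drop_subset _ _ (List.tail_subset _ h))
    have hv3S : InterferesOn N S P11 N.s2 v3 := by
      refine ⟨Or.inr (Or.inl hv3P22), fun h => hdisj h hv3P22,
        ⟨v4, hv4P11, Or.inl hv4P11, hv3v4⟩,
        _, tun_take_indexOf N hP22 hv3P22, ?_, ?_⟩
      · exact fun x hx => Or.inr (Or.inl (List.take_subset _ _ hx))
      · exact fun x hx h => hdisj h (List.take_subset _ _ hx)
    have hv1S : InterferesOn N S P11 N.s2 v1 := by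
      obtain ⟨_, _, ⟨w', hw'P11, _, he'⟩, _⟩ := hv1int
      exact ⟨hW2S _ (tun_mem_last hW2), hv1P11, ⟨w', hw'P11, Or.inl hw'P11, he'⟩,
        W2, hW2, hW2S, hW2P11⟩
    have hne31 : v3 ≠ v1 := fun h => hv1P22 (h ▸ hv3P22)
    have hsub : ({v3, v1} : Set V) ⊆ {v | InterferesOn N S P11 N.s2 v} := by
      intro x hx
      rcases hx with rfl | hx
      · exact hv3S
      · rw [Set.mem_singleton_iff.mp hx]; exact hv1S
    have h2le : 2 ≤ nInterf N S P11 N.s2 := by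
      have hcalc : ({v3, v1} : Set V).ncard ≤ nInterf N S P11 N.s2 :=
        Set.ncard_le_ncard hsub (Set.toFinite _)
      rw [Set.ncard_pair hne31] at hcalc
      exact hcalc
    have h22 : nInterf N S P22 N.s1 = 1 := by
      by_contra hne
      exact hNoMan P11 P22 hP11 hP22 hdisj
        ⟨S, fun x hx => Or.inl hx, fun x hx => Or.inr (Or.inl hx), by omega, hne⟩
    obtain ⟨a2, ha2⟩ := Set.ncard_eq_one.mp h22
    have ha2mem : InterferesOn N S P22 N.s1 a2 := by
      have h : a2 ∈ ({a2} : Set V) := rfl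
      rw [← ha2] at h
      exact h
    have ha2v2 : a2 = v2 := by
      have h : a2 ∈ {v | InterferesOn N Set.univ P22 N.s1 v} := tun_interf_lift N ha2mem
      rw [hv2unique] at h
      exact h
    obtain ⟨_, _, _, q, hq, hqS, hqP22⟩ := ha2mem
    rw [ha2v2] at hq
    exact hv6S (hqS v6 (claim1 q hq))
  exact ⟨claim1, claim2⟩
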